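/- Let (M, +, 0) be a monoid. The category of sets with unit 1 = {∗}, tensor A ×^M B := A × M × B, λ(∗, m, b) = b, ρ(a) = (a, 0, ∗), and α((a,m,b), n, c) = (a, m+n, (b,n,c)), is a left closed skew monoidal category, with internal hom B ⇒^M C = C^(M × B). -/

import Mathlib

universe u

/-- The warped tensor `A ×^M B := A × M × B` on the category of sets. -/
def tM (M : Type u) (A B : Type u) : Type u := A × M × B

/-- Functorial action of `×^M`. -/
def mapM {M A A' B B' : Type u} (f : A → A') (g : B → B') :
    tM M A B → tM M A' B' := fun x => (f x.1, x.2.1, g x.2.2)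

/-- The associator `((a,m,b),n,c) ↦ (a, m+n, (b,n,c))`. -/
def aM {M : Type u} [AddMonoid M] (A B C : Type u) :
    tM M (tM M A B) C → tM M A (tM M B C) :=
  fun x => (x.1.1, x.1.2.1 + x.2.1, (x.1.2.2, x.2.1, x.2.2))

/-- The left unitor `(∗, m, b) ↦ b`. -/
def lM {M : Type u} (B : Type u) : tM M PUnit B → B := fun x => x.2.2

/-- The right unitor `a ↦ (a, 0, ∗)`. -/
def rM {M : Type u} [AddMonoid M] (A : Type u) : A → tM M A PUnit :=
  fun a => (a, 0, PUnit.unit)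

theorem statement12 (M : Type u) [AddMonoid M] :
    -- naturality of α, λ, ρ
    (∀ {A A' B B' C C' : Type u} (f : A → A') (g : B → B') (h : C → C')
        (x : tM M (tM M A B) C),
      aM A' B' C' (mapM (mapM f g) h x) = mapM f (mapM g h) (aM A B C x)) ∧
    (∀ {B B' : Type u} (g : B → B') (x : tM M PUnit B),
      lM B' (mapM id g x) = g (lM B x)) ∧
    (∀ {A A' : Type u} (f : A → A') (a : A),
      rM (M := M) A' (f a) = mapM f id (rM (M := M) A a)) ∧
    -- pentagon
    (∀ (A B C D : Type u) (x : tM M (tM M (tM M A B) C) D),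
      mapM (id : A → A) (aM B C D)
          (aM A (tM M B C) D (mapM (aM A B C) (id : D → D) x)) =
        aM A B (tM M C D) (aM (tM M A B) C D x)) ∧
    -- λ_1 ∘ ρ_1 = 1
    (∀ x : PUnit.{u + 1}, lM (M := M) PUnit (rM (M := M) PUnit x) = x) ∧
    -- the three unit axioms
    (∀ (A B : Type u) (x : tM M (tM M PUnit A) B),
      lM (tM M A B) (aM PUnit A B x) = mapM (lM A) (id : B → B) x) ∧
    (∀ (A B : Type u) (x : tM M A B),
      mapM (id : A → A) (lM B) (aM A PUnit B (mapM (rM A) (id : B → B) x)) =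
        x) ∧
    (∀ (A B : Type u) (x : tM M A B),
      aM A B PUnit (rM (tM M A B) x) = mapM (id : A → A) (rM B) x) ∧
    -- left closure with internal hom `B ⇒^M C = C^(M × B)`
    (∀ A : Type u, ∃ e : ∀ (X C : Type u), (tM M X A → C) ≃ (X → M × A → C),
      (∀ (X X' C : Type u) (g : X' → X) (f : tM M X A → C),
        e X' C (fun z => f (mapM g id z)) = fun x => e X C f (g x)) ∧
      (∀ (X C C' : Type u) (h : C → C') (f : tM M X A → C),
        e X C' (fun z => h (f z)) = fun x p => h (e X C f x p))) := by
  refine ⟨fun f g h x => rfl, fun g x => rfl, fun f a => rfl,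
    fun A B C D x => ?_, fun x => rfl, fun A B x => rfl,
    fun A B x => ?_, fun A B x => ?_, fun A => ?_⟩
  · simp [tM, aM, _root_.mapM, add_assoc]
  · simp [tM, aM, _root_.mapM, lM, rM]; rfl
  · simp [tM, aM, _root_.mapM, rM]
  · refine ⟨fun X C => ⟨fun f x p => f (x, p.1, p.2), fun g z => g z.1 (z.2.1, z.2.2),
      fun f => rfl, fun g => rfl⟩, fun X X' C g f => rfl, fun X C C' h f => rfl⟩
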